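/- Let n = 2m and L(x) = Σ_{i=0}^k α_i x^{2^{a_i}} be a linearized polynomial with all α_i ∈ F_{2^m}. Then Σ_{a ∈ F_{2^n}} (-1)^{Tr^n_1((a^{2^m}+a)·L(a))} = 2^m · Σ_{u ∈ F_{2^m}} (-1)^{Tr^m_1(Σ_{i=0}^k α_i u^{2^{a_i}+1})}. -/

import Mathlib

open Finset

/-- The sign `(-1)^{Tr(y)}` where `Tr(y) = ∑_{i<m} y^{2^i}` is the absolute trace
(valued in the prime field, viewed inside `F`). -/
def chi {F : Type*} [Field F] [DecidableEq F] (m : ℕ) (y : F) : ℤ :=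
  if (∑ i ∈ Finset.range m, y ^ 2 ^ i) = 0 then 1 else -1
theorem stmt_8 (m : ℕ) (hm : 1 ≤ m) (F : Type*) [Field F] [Fintype F] [DecidableEq F]
    (hF : Fintype.card F = 2 ^ (2 * m))
    (k : ℕ) (α : Fin (k + 1) → F) (e : Fin (k + 1) → ℕ)
    (hα : ∀ i, (α i) ^ 2 ^ m = α i) :
    ∑ a : F, chi (2 * m) ((a ^ 2 ^ m + a) * ∑ i, α i * a ^ 2 ^ (e i))
      = 2 ^ m * ∑ u ∈ univ.filter (fun u : F => u ^ 2 ^ m = u),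
          chi m (∑ i, α i * u ^ (2 ^ (e i) + 1)) := by
  classical
  -- characteristic 2
  have hcast : ((Fintype.card F : ℕ) : F) = 0 := FiniteField.cast_card_eq_zero F
  rw [hF] at hcast
  push_cast at hcast
  have h2 : (2 : F) = 0 := by
    have hne : 2 * m ≠ 0 := by omega
    exact pow_eq_zero_iff hne |>.mp hcast
  have hchar : ringChar F = 2 := by
    have hdvd : ringChar F ∣ 2 := by
      have := (ringChar.spec F 2)
      rw [Nat.cast_ofNat] at this
      exact this.mp h2
    have h1 : ringChar F ≠ 1 := CharP.ringChar_ne_one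
    rcases (Nat.prime_two).eq_one_or_self_of_dvd _ hdvd with h | h
    · exact absurd h h1
    · exact h
  haveI : CharP F 2 := hchar ▸ ringChar.charP F
  haveI : ExpChar F 2 := ExpChar.prime Nat.prime_two
  -- Frobenius facts
  have hqq : ∀ a : F, a ^ 2 ^ (2 * m) = a := by
    intro a; rw [← hF]; exact FiniteField.pow_card a
  have hfrob : ∀ x y : F, (x + y) ^ (2:ℕ) ^ m = x ^ (2:ℕ) ^ m + y ^ (2:ℕ) ^ m := by
    intro x y; rw [add_pow_char_pow]
  -- the map f and its basic properties
  set f : F → F := fun a => a ^ 2 ^ m + a with hf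
  have hfpow : ∀ a : F, (f a) ^ 2 ^ m = f a := by
    intro a
    have : (a ^ 2 ^ m) ^ (2:ℕ) ^ m = a := by
      rw [← pow_mul, ← pow_add, ← two_mul]; exact hqq a
    rw [hf]; simp only
    rw [hfrob, this, add_comm]
  have hfadd : ∀ a b : F, f (a + b) = f a + f b := by
    intro a b
    simp only [hf]
    rw [hfrob]
    ring
  -- trace splitting : chi (2m) x = chi m (x + x^(2^m))
  have htr : ∀ x : F, (∑ i ∈ range (2 * m), x ^ 2 ^ i)
      = ∑ i ∈ range m, (x + x ^ 2 ^ m) ^ 2 ^ i := by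
    intro x
    have hterm : ∀ i : ℕ, (x + x ^ 2 ^ m) ^ 2 ^ i = x ^ 2 ^ i + x ^ 2 ^ (m + i) := by
      intro i
      rw [add_pow_char_pow, ← pow_mul, ← pow_add]
    rw [two_mul, Finset.sum_range_add]
    simp_rw [hterm, Finset.sum_add_distrib]
  have hchi : ∀ x : F, chi (2 * m) x = chi m (x + x ^ 2 ^ m) := by
    intro x
    unfold chi
    rw [htr x]
  -- pointwise reduction of the summand
  have hpoint : ∀ a : F, ((a ^ 2 ^ m + a) * ∑ i, α i * a ^ 2 ^ (e i))
      + ((a ^ 2 ^ m + a) * ∑ i, α i * a ^ 2 ^ (e i)) ^ 2 ^ m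
      = ∑ i, α i * (f a) ^ (2 ^ (e i) + 1) := by
    intro a
    set u : F := a ^ 2 ^ m + a with hu
    have hupow : u ^ (2:ℕ) ^ m = u := hfpow a
    have hLpow : (∑ i, α i * a ^ 2 ^ (e i)) ^ (2:ℕ) ^ m
        = ∑ i, α i * (a ^ 2 ^ m) ^ 2 ^ (e i) := by
      rw [sum_pow_char_pow]
      refine Finset.sum_congr rfl fun i _ => ?_
      rw [mul_pow, hα i, ← pow_mul, mul_comm ((2:ℕ) ^ e i), pow_mul]
    rw [mul_pow, hupow, hLpow, ← mul_add, ← Finset.sum_add_distrib]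
    have heq : ∀ i : Fin (k+1), α i * a ^ 2 ^ (e i) + α i * (a ^ 2 ^ m) ^ 2 ^ (e i)
        = α i * u ^ 2 ^ (e i) := by
      intro i
      rw [← mul_add, ← add_pow_char_pow, hu, add_comm]
    simp_rw [heq]
    rw [Finset.mul_sum]
    refine Finset.sum_congr rfl fun i _ => ?_
    rw [pow_succ]
    ring
  -- rewrite the LHS summand
  have hLHS : ∀ a : F, chi (2 * m) ((a ^ 2 ^ m + a) * ∑ i, α i * a ^ 2 ^ (e i))
      = chi m (∑ i, α i * (f a) ^ (2 ^ (e i) + 1)) := by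
    intro a
    rw [hchi, hpoint a]
  -- kernel and image sets
  set S : Finset F := univ.filter (fun u : F => u ^ 2 ^ m = u) with hS
  set T : Finset F := univ.image f with hT
  have hTS : T ⊆ S := by
    intro u hu
    rw [hT, Finset.mem_image] at hu
    obtain ⟨a, _, rfl⟩ := hu
    rw [hS, Finset.mem_filter]
    exact ⟨Finset.mem_univ _, hfpow a⟩
  -- S.card ≤ 2^m via roots
  have hScard_le : S.card ≤ 2 ^ m := by
    set P : Polynomial F := Polynomial.X ^ 2 ^ m - Polynomial.X with hP
    have hdeg : P.natDegree = 2 ^ m := by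
      rw [hP, Polynomial.natDegree_sub_eq_left_of_natDegree_lt]
      · exact Polynomial.natDegree_X_pow _
      · rw [Polynomial.natDegree_X_pow, Polynomial.natDegree_X]
        exact Nat.one_lt_two_pow (by omega)
    have hP0 : P ≠ 0 := by
      intro h
      rw [h, Polynomial.natDegree_zero] at hdeg
      exact absurd hdeg.symm (by positivity)
    have hsub : S ⊆ P.roots.toFinset := by
      intro u hu
      rw [hS, Finset.mem_filter] at hu
      rw [Multiset.mem_toFinset, Polynomial.mem_roots hP0]
      simp [hP, Polynomial.IsRoot, sub_eq_zero, hu.2]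
    calc S.card ≤ P.roots.toFinset.card := Finset.card_le_card hsub
      _ ≤ Multiset.card P.roots := Multiset.toFinset_card_le _
      _ ≤ P.natDegree := Polynomial.card_roots' P
      _ = 2 ^ m := hdeg
  -- fibers over image points all have card S.card
  have hfiber : ∀ u ∈ T, (univ.filter (fun a : F => f a = u)).card = S.card := by
    intro u hu
    rw [hT, Finset.mem_image] at hu
    obtain ⟨a₀, _, ha₀⟩ := hu
    apply Finset.card_nbij' (i := fun a => a + a₀) (j := fun b => b + a₀)
    · intro a ha
      replace ha : a ∈ univ.filter (fun a : F => f a = u) := ha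
      show a + a₀ ∈ S
      rw [Finset.mem_filter] at ha
      rw [hS, Finset.mem_filter]
      refine ⟨Finset.mem_univ _, ?_⟩
      have h0 : f (a + a₀) = 0 := by
        rw [hfadd, ha.2, ha₀, CharTwo.add_self_eq_zero]
      have h' : (a + a₀) ^ 2 ^ m + (a + a₀) = 0 := h0
      have := add_eq_zero_iff_eq_neg.mp h'
      rwa [CharTwo.neg_eq] at this
    · intro b hb
      replace hb : b ∈ S := hb
      show b + a₀ ∈ univ.filter (fun a : F => f a = u)
      rw [hS, Finset.mem_filter] at hb
      rw [Finset.mem_filter]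
      refine ⟨Finset.mem_univ _, ?_⟩
      have hfb : f b = 0 := by
        show b ^ 2 ^ m + b = 0
        rw [hb.2, CharTwo.add_self_eq_zero]
      rw [hfadd, hfb, ha₀, zero_add]
    · intro a _
      show a + a₀ + a₀ = a
      rw [add_assoc, CharTwo.add_self_eq_zero, add_zero]
    · intro b _
      show b + a₀ + a₀ = b
      rw [add_assoc, CharTwo.add_self_eq_zero, add_zero]
  -- counting : Fintype.card F = T.card * S.card
  have hcount : 2 ^ (2 * m) = T.card * S.card := by
    have h1 : (univ : Finset F).card = ∑ u ∈ T, (univ.filter (fun a : F => f a = u)).card :=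
      Finset.card_eq_sum_card_image f univ
    rw [Finset.card_univ, hF] at h1
    rw [h1, Finset.sum_congr rfl hfiber, Finset.sum_const, smul_eq_mul]
  have hSpos : 0 < S.card := by
    rcases Nat.eq_zero_or_pos S.card with h | h
    · rw [h, mul_zero] at hcount
      exact absurd hcount.symm (by positivity)
    · exact h
  have hTle : T.card ≤ S.card := Finset.card_le_card hTS
  have hScard : S.card = 2 ^ m := by
    have h2m : 2 ^ (2 * m) = 2 ^ m * 2 ^ m := by rw [two_mul, pow_add]
    nlinarith [hcount, hTle, hScard_le, h2m]
  have hTcard : T.card = 2 ^ m := by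
    have h2m : 2 ^ (2 * m) = 2 ^ m * 2 ^ m := by rw [two_mul, pow_add]
    rw [hScard, h2m] at hcount
    exact Nat.eq_of_mul_eq_mul_right (by positivity) hcount.symm
  have hTeqS : T = S := Finset.eq_of_subset_of_card_le hTS (by rw [hScard, hTcard])
  -- put everything together
  calc ∑ a : F, chi (2 * m) ((a ^ 2 ^ m + a) * ∑ i, α i * a ^ 2 ^ (e i))
      = ∑ a : F, chi m (∑ i, α i * (f a) ^ (2 ^ (e i) + 1)) :=
        Finset.sum_congr rfl fun a _ => hLHS a
    _ = ∑ u ∈ T, (univ.filter (fun a : F => f a = u)).card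
          • chi m (∑ i, α i * u ^ (2 ^ (e i) + 1)) := by
        rw [hT]
        exact Finset.sum_comp (fun u => chi m (∑ i, α i * u ^ (2 ^ (e i) + 1))) f
    _ = ∑ u ∈ S, (2 ^ m : ℤ) * chi m (∑ i, α i * u ^ (2 ^ (e i) + 1)) := by
        rw [hTeqS]
        refine Finset.sum_congr rfl fun u hu => ?_
        rw [hfiber u (hTeqS ▸ hu), hScard, nsmul_eq_mul]
        push_cast
        ring
    _ = 2 ^ m * ∑ u ∈ S, chi m (∑ i, α i * u ^ (2 ^ (e i) + 1)) := by
        rw [Finset.mul_sum]
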